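/- If each f_i is convex and continuously differentiable, then a point u is Pareto critical (0 ∈ co{∇f_i(u)}) if and only if u is a weak Pareto point (there is no v with f_i(v) < f_i(u) for all i). -/

import Mathlib

open scoped RealInnerProductSpace

open InnerProductSpace

/-- Convexity inequality via the Fréchet derivative. -/
lemma convex_fderiv_le {H : Type*} [NormedAddCommGroup H] [InnerProductSpace ℝ H]
    {f : H → ℝ} {φ : H →L[ℝ] ℝ} {u v : H}
    (hconv : ConvexOn ℝ Set.univ f) (hd : HasFDerivAt f φ u) :
    φ (v - u) ≤ f v - f u := by
  set g : ℝ → ℝ := fun t => f (u + t • (v - u)) with hg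
  have hline : HasDerivAt (fun t : ℝ => u + t • (v - u)) (v - u) (0 : ℝ) := by
    simpa using ((hasDerivAt_id (0:ℝ)).smul_const (v - u)).const_add u
  have hgd : HasDerivAt g (φ (v - u)) 0 := by
    have hd' : HasFDerivAt f φ (u + (0:ℝ) • (v - u)) := by simpa using hd
    exact hd'.comp_hasDerivAt 0 hline
  have htend : Filter.Tendsto (slope g 0) (nhdsWithin 0 (Set.Ioi 0)) (nhds (φ (v - u))) := by
    have := hasDerivAt_iff_tendsto_slope.mp hgd
    exact this.mono_left (nhdsWithin_mono _ (fun t ht => ne_of_gt ht))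
  refine le_of_tendsto htend ?_
  filter_upwards [Ioo_mem_nhdsGT_of_mem (by norm_num : (0:ℝ) ∈ Set.Ico 0 1)] with t ht
  obtain ⟨ht0, ht1⟩ := ht
  have hpt : u + t • (v - u) = (1 - t) • u + t • v := by
    rw [smul_sub, sub_smul, one_smul]; abel
  have hcomb : g t ≤ (1 - t) * f u + t * f v := by
    have := hconv.2 (Set.mem_univ u) (Set.mem_univ v) (by linarith : (0:ℝ) ≤ 1 - t)
      (le_of_lt ht0) (by ring)
    simpa [hg, hpt, smul_eq_mul] using this
  have : g t - g 0 ≤ t * (f v - f u) := by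
    have hg0 : g 0 = f u := by simp [hg]
    rw [hg0]; nlinarith
  rw [slope_def_field, sub_zero, div_le_iff₀ ht0]
  nlinarith

/-- Descent direction lemma. -/
lemma descent {H : Type*} [NormedAddCommGroup H] [InnerProductSpace ℝ H]
    {f : H → ℝ} {φ : H →L[ℝ] ℝ} {u d : H}
    (hd : HasFDerivAt f φ u) (hneg : φ d < 0) :
    ∀ᶠ t in nhdsWithin (0:ℝ) (Set.Ioi 0), f (u + t • d) < f u := by
  set g : ℝ → ℝ := fun t => f (u + t • d) with hg
  have hgd : HasDerivAt g (φ d) 0 := by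
    have hline : HasDerivAt (fun t : ℝ => u + t • d) d (0 : ℝ) := by
      simpa using ((hasDerivAt_id (0:ℝ)).smul_const d).const_add u
    have hd' : HasFDerivAt f φ (u + (0:ℝ) • d) := by simpa using hd
    exact hd'.comp_hasDerivAt 0 hline
  have htend : Filter.Tendsto (slope g 0) (nhdsWithin 0 (Set.Ioi 0)) (nhds (φ d)) := by
    have := hasDerivAt_iff_tendsto_slope.mp hgd
    exact this.mono_left (nhdsWithin_mono _ (fun t ht => ne_of_gt ht))
  have hev : ∀ᶠ t in nhdsWithin (0:ℝ) (Set.Ioi 0), slope g 0 t < 0 :=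
    htend.eventually (Filter.Tendsto.eventually_lt_const hneg Filter.tendsto_id)
  filter_upwards [hev, self_mem_nhdsWithin] with t hts (ht : t ∈ Set.Ioi 0)
  rw [slope_def_field, sub_zero, div_lt_iff₀ ht] at hts
  have hg0 : g 0 = f u := by simp [hg]
  have : g t < g 0 := by nlinarith [hts]
  simpa [hg, hg0] using this

/-- In the convex case, Pareto critical points coincide with weak Pareto points. -/
theorem pareto_critical_iff_weak_pareto_of_convex
    {H : Type*} [NormedAddCommGroup H] [InnerProductSpace ℝ H] [CompleteSpace H]
    {q : ℕ} (f : Fin q → H → ℝ) (hf : ∀ i, ContDiff ℝ 1 (f i))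
    (hconv : ∀ i, ConvexOn ℝ Set.univ (f i)) (u : H) :
    (0 : H) ∈ convexHull ℝ (Set.range fun i => gradient (f i) u) ↔
      ¬ ∃ v : H, ∀ i, f i v < f i u := by
  have hdiff : ∀ i, DifferentiableAt ℝ (f i) u := fun i =>
    ((hf i).differentiable one_ne_zero).differentiableAt
  have hfd : ∀ i, HasFDerivAt (f i) (toDual ℝ H (gradient (f i) u)) u := fun i =>
    hasGradientAt_iff_hasFDerivAt.mp (hdiff i).hasGradientAt
  constructor
  · rintro h0 ⟨v, hv⟩
    -- every gradient has negative inner product with v - u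
    set S : Set H := {w | ⟪w, v - u⟫ < 0} with hS
    have hSconv : Convex ℝ S := by
      have : S = (innerSL ℝ (E := H)).flip (v - u) ⁻¹' Set.Iio 0 := by
        ext w; simp only [hS, Set.mem_setOf_eq, Set.mem_preimage, ContinuousLinearMap.flip_apply,
          innerSL_apply_apply, Set.mem_Iio, real_inner_comm w (v - u), inner_sub_left, sub_neg]
      rw [this]
      exact (convex_Iio (0:ℝ)).linear_preimage ((innerSL ℝ (E := H)).flip (v - u)).toLinearMap
    have hsub : Set.range (fun i => gradient (f i) u) ⊆ S := by
      rintro _ ⟨i, rfl⟩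
      have := convex_fderiv_le (hconv i) (hfd i) (v := v)
      have hlt : f i v - f i u < 0 := by linarith [hv i]
      have : ⟪gradient (f i) u, v - u⟫ < 0 := by
        have happ : (toDual ℝ H (gradient (f i) u)) (v - u) = ⟪gradient (f i) u, v - u⟫ :=
          InnerProductSpace.toDual_apply_apply
        rw [happ] at this
        linarith
      exact this
    have := convexHull_min hsub hSconv h0
    simp [hS] at this
  · intro hnw
    by_contra h0
    -- separate 0 from the compact convex hull
    set K := convexHull ℝ (Set.range fun i => gradient (f i) u) with hK
    have hKc : IsCompact K := (Set.finite_range _).isCompact_convexHull (𝕜 := ℝ)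
    obtain ⟨φ, c, h0c, hcb⟩ :=
      geometric_hahn_banach_point_closed (convex_convexHull ℝ _) hKc.isClosed h0
    have hc0 : (0:ℝ) < c := by simpa using h0c
    set d : H := -((toDual ℝ H).symm φ) with hd
    have hφ : ∀ x : H, φ x = ⟪(toDual ℝ H).symm φ, x⟫ := fun x => by
      rw [InnerProductSpace.toDual_symm_apply]
    -- each gradient has positive pairing with φ, so negative with d
    have hneg : ∀ i, (toDual ℝ H (gradient (f i) u)) d < 0 := by
      intro i
      have hgK : gradient (f i) u ∈ K := subset_convexHull ℝ _ ⟨i, rfl⟩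
      have hφg : c < φ (gradient (f i) u) := hcb _ hgK
      have : (toDual ℝ H (gradient (f i) u)) d = ⟪gradient (f i) u, d⟫ :=
        InnerProductSpace.toDual_apply_apply
      rw [this, hd, inner_neg_right, real_inner_comm, ← hφ]
      linarith
    have hev : ∀ᶠ t in nhdsWithin (0:ℝ) (Set.Ioi 0), ∀ i, f i (u + t • d) < f i u := by
      rw [Filter.eventually_all]
      exact fun i => descent (hfd i) (hneg i)
    obtain ⟨t, ht⟩ := hev.exists
    exact hnw ⟨u + t • d, ht⟩
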